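/- For every integrable random variable X on an atomless probability space and every real threshold t, the mean excess value satisfies E[(X − t)_+] = max over α ∈ [0,1] of (1 − α)·(ES_α(X) − t), and the maximum is attained. -/

import Mathlib

open MeasureTheory Set Filter

/-- An atomless measure: every set of nonzero measure can be split nontrivially. -/
def Atomless {Ω : Type*} [MeasurableSpace Ω] (μ : Measure Ω) : Prop :=
  ∀ A : Set Ω, MeasurableSet A → μ A ≠ 0 →
    ∃ B ⊆ A, MeasurableSet B ∧ μ B ≠ 0 ∧ μ B ≠ μ A

/-- Left quantile (lower Value-at-Risk) of `X` at level `β`. -/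
noncomputable def VaR {Ω : Type*} [MeasurableSpace Ω] (μ : Measure Ω) (X : Ω → ℝ) (β : ℝ) : ℝ :=
  sInf {t : ℝ | ENNReal.ofReal β ≤ μ {ω | X ω ≤ t}}

/-- Expected Shortfall of `X` at level `α ∈ [0,1)`; the value at `α = 1` is junk, but it is
only ever used multiplied by `1 - α = 0`, implementing the convention `0 · x = 0`. -/
noncomputable def ES {Ω : Type*} [MeasurableSpace Ω] (μ : Measure Ω) (X : Ω → ℝ) (α : ℝ) : ℝ :=
  (1 - α)⁻¹ * ∫ β in Set.Ioo α 1, VaR μ X β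

section aux

variable {Ω : Type*} [MeasurableSpace Ω] {μ : Measure Ω} [IsProbabilityMeasure μ]
  {X : Ω → ℝ}

lemma VaR_le_iff (hX : Measurable X) {β s : ℝ} (hβ0 : 0 < β) (hβ1 : β < 1) :
    VaR μ X β ≤ s ↔ ENNReal.ofReal β ≤ μ {ω | X ω ≤ s} := by
  set S : Set ℝ := {u : ℝ | ENNReal.ofReal β ≤ μ {ω | X ω ≤ u}} with hS
  have hmono : ∀ u v : ℝ, u ≤ v → μ {ω | X ω ≤ u} ≤ μ {ω | X ω ≤ v} :=
    fun u v huv => measure_mono (fun ω h => le_trans h huv)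
  -- Nonempty
  have hne : S.Nonempty := by
    have hmonoset : Monotone (fun n : ℕ => {ω | X ω ≤ (n : ℝ)}) := by
      intro m n hmn ω hω
      simp only [mem_setOf_eq] at hω ⊢
      exact hω.trans (Nat.cast_le.mpr hmn)
    have hU := tendsto_measure_iUnion_atTop (μ := μ) hmonoset
    have hUuniv : (⋃ n : ℕ, {ω | X ω ≤ (n : ℝ)}) = univ := by
      ext ω
      simp only [mem_iUnion, mem_setOf_eq, mem_univ, iff_true]
      obtain ⟨n, hn⟩ := exists_nat_ge (X ω)
      exact ⟨n, hn⟩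
    rw [hUuniv, measure_univ] at hU
    have hlt : ENNReal.ofReal β < 1 := by
      rw [← ENNReal.ofReal_one]
      exact ENNReal.ofReal_lt_ofReal_iff_of_nonneg hβ0.le |>.mpr hβ1
    obtain ⟨n, hn⟩ := (hU.eventually_const_lt hlt).exists
    exact ⟨(n : ℝ), le_of_lt hn⟩
  -- Bounded below
  have hbdd : BddBelow S := by
    have hanti : Antitone (fun n : ℕ => {ω | X ω ≤ -(n : ℝ)}) := by
      intro m n hmn ω hω
      simp only [mem_setOf_eq] at hω ⊢
      refine hω.trans ?_
      have : (m:ℝ) ≤ (n:ℝ) := Nat.cast_le.mpr hmn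
      linarith
    have hnm : ∀ n : ℕ, NullMeasurableSet {ω | X ω ≤ -(n:ℝ)} μ :=
      fun n => (hX measurableSet_Iic).nullMeasurableSet
    have hI := tendsto_measure_iInter_atTop (μ := μ) hnm hanti ⟨0, measure_ne_top _ _⟩
    have hIempty : (⋂ n : ℕ, {ω | X ω ≤ -(n : ℝ)}) = (∅ : Set Ω) := by
      ext ω
      simp only [mem_iInter, mem_setOf_eq, mem_empty_iff_false, iff_false, not_forall]
      obtain ⟨n, hn⟩ := exists_nat_gt (-X ω)
      exact ⟨n, by linarith⟩
    rw [hIempty, measure_empty] at hI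
    have hpos : (0 : ENNReal) < ENNReal.ofReal β := ENNReal.ofReal_pos.mpr hβ0
    obtain ⟨n, hn⟩ := (hI.eventually_lt_const hpos).exists
    refine ⟨-(n : ℝ), fun u hu => ?_⟩
    by_contra hlt
    push_neg at hlt
    exact absurd (hu.trans (hmono u _ hlt.le)) (not_le.mpr hn)
  constructor
  · intro hle
    have key : ∀ n : ℕ, ENNReal.ofReal β ≤ μ {ω | X ω ≤ s + ((n : ℝ) + 1)⁻¹} := by
      intro n
      have hpos : (0 : ℝ) < ((n : ℝ) + 1)⁻¹ := by positivity
      have hlt : sInf S < s + ((n : ℝ) + 1)⁻¹ := lt_of_le_of_lt hle (by linarith)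
      obtain ⟨u, huS, hu⟩ := (csInf_lt_iff hbdd hne).mp hlt
      exact huS.trans (hmono u _ hu.le)
    have hanti : Antitone (fun n : ℕ => {ω | X ω ≤ s + ((n : ℝ) + 1)⁻¹}) := by
      intro m n hmn ω hω
      simp only [mem_setOf_eq] at hω ⊢
      refine hω.trans (add_le_add_right ?_ s)
      have h1 : (0:ℝ) < (m : ℝ) + 1 := by positivity
      exact inv_anti₀ h1 (by exact_mod_cast add_le_add_left (Nat.cast_le.mpr hmn) 1)
    have hiInter : (⋂ n : ℕ, {ω | X ω ≤ s + ((n : ℝ) + 1)⁻¹}) = {ω | X ω ≤ s} := by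
      ext ω
      simp only [mem_iInter, mem_setOf_eq]
      constructor
      · intro hfa
        refine le_of_forall_pos_le_add fun ε hε => ?_
        obtain ⟨n, hn⟩ := exists_nat_one_div_lt hε
        have := hfa n
        rw [one_div] at hn
        linarith
      · intro h n
        have : (0 : ℝ) < ((n : ℝ) + 1)⁻¹ := by positivity
        linarith
    have hnm : ∀ n : ℕ, NullMeasurableSet {ω | X ω ≤ s + ((n:ℝ)+1)⁻¹} μ :=
      fun n => (hX measurableSet_Iic).nullMeasurableSet
    have hmeq := hanti.measure_iInter (μ := μ) hnm ⟨0, measure_ne_top _ _⟩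
    rw [hiInter] at hmeq
    rw [hmeq]
    exact le_iInf key
  · intro h
    exact csInf_le hbdd h

end aux

theorem reverse_ES_optimization {Ω : Type*} [MeasurableSpace Ω] (μ : Measure Ω)
    [IsProbabilityMeasure μ] (hμ : Atomless μ) (X : Ω → ℝ)
    (hXmeas : Measurable X) (hXint : Integrable X μ) (t : ℝ) :
    IsGreatest {y : ℝ | ∃ α ∈ Set.Icc (0 : ℝ) 1, y = (1 - α) * (ES μ X α - t)}
      (∫ ω, max (X ω - t) 0 ∂μ) := by
  classical
  set F : ℝ → ENNReal := fun s => μ {ω | X ω ≤ s} with hF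
  have hF1 : ∀ s, F s ≤ 1 := fun s => prob_le_one
  have hFne : ∀ s, F s ≠ ⊤ := fun s => (lt_of_le_of_lt (hF1 s) ENNReal.one_lt_top).ne
  set c : ℝ → ℝ := fun s => (F s).toReal with hc
  have hc0 : ∀ s, 0 ≤ c s := fun s => ENNReal.toReal_nonneg
  have hc1 : ∀ s, c s ≤ 1 := fun s => by
    rw [hc]
    calc (F s).toReal ≤ (1 : ENNReal).toReal := ENNReal.toReal_mono ENNReal.one_ne_top (hF1 s)
    _ = 1 := by simp
  -- key characterization on (0,1)
  have hkey : ∀ β ∈ Ioo (0:ℝ) 1, ∀ s : ℝ, VaR μ X β ≤ s ↔ β ≤ c s := by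
    intro β hβ s
    rw [VaR_le_iff hXmeas hβ.1 hβ.2]
    exact ENNReal.ofReal_le_iff_le_toReal (hFne s)
  -- measurable version of VaR on (0,1)
  set g : ℝ → ℝ := (Ioo (0:ℝ) 1).piecewise (VaR μ X) (fun _ => 0) with hg
  have hgeq : EqOn g (VaR μ X) (Ioo (0:ℝ) 1) := fun β hβ => piecewise_eq_of_mem _ _ _ hβ
  have hgpre : ∀ s : ℝ, {β | g β ≤ s} =
      (Ioo (0:ℝ) 1 ∩ Iic (c s)) ∪ ((Ioo (0:ℝ) 1)ᶜ ∩ {β : ℝ | (0:ℝ) ≤ s}) := by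
    intro s
    ext β
    by_cases hβ : β ∈ Ioo (0:ℝ) 1
    · simp only [mem_setOf_eq, hgeq hβ, mem_union, mem_inter_iff, hβ, mem_compl_iff,
        not_true_eq_false, false_and, or_false, true_and, mem_Iic]
      exact hkey β hβ s
    · simp only [mem_setOf_eq, hg, piecewise_eq_of_notMem _ _ _ hβ, mem_union, mem_inter_iff,
        hβ, false_and, false_or, mem_compl_iff, not_false_eq_true, true_and]
  have hgmeas : Measurable g := by
    refine measurable_of_Iic fun s => ?_
    have : g ⁻¹' Iic s = {β | g β ≤ s} := rfl
    rw [this, hgpre s]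
    exact ((measurableSet_Ioo.inter measurableSet_Iic).union
      (measurableSet_Ioo.compl.inter (MeasurableSet.const _)))
  set ν : Measure ℝ := volume.restrict (Ioo (0:ℝ) 1) with hν
  have hνprob : IsProbabilityMeasure ν := by
    constructor
    rw [hν, Measure.restrict_apply MeasurableSet.univ, univ_inter, Real.volume_Ioo]
    norm_num
  -- distribution of g under ν equals the law of X
  have hdist : ∀ s : ℝ, ν {β | g β ≤ s} = F s := by
    intro s
    rw [hν, Measure.restrict_apply' measurableSet_Ioo, hgpre s]
    have hseteq : ((Ioo (0:ℝ) 1 ∩ Iic (c s)) ∪ ((Ioo (0:ℝ) 1)ᶜ ∩ {β : ℝ | (0:ℝ) ≤ s}))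
        ∩ Ioo 0 1 = Ioo (0:ℝ) 1 ∩ Iic (c s) := by
      ext β
      constructor
      · rintro ⟨h1 | h2, hβ⟩
        · exact h1
        · exact absurd hβ h2.1
      · intro h
        exact ⟨Or.inl h, h.1⟩
    rw [hseteq]
    have hle : volume (Ioo (0:ℝ) 1 ∩ Iic (c s)) ≤ ENNReal.ofReal (c s) := by
      calc volume (Ioo (0:ℝ) 1 ∩ Iic (c s)) ≤ volume (Ioc (0:ℝ) (c s)) :=
            measure_mono (fun β hβ => ⟨hβ.1.1, hβ.2⟩)
      _ = ENNReal.ofReal (c s) := by rw [Real.volume_Ioc, sub_zero]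
    have hge : ENNReal.ofReal (c s) ≤ volume (Ioo (0:ℝ) 1 ∩ Iic (c s)) := by
      calc ENNReal.ofReal (c s) = volume (Ioo (0:ℝ) (c s)) := by rw [Real.volume_Ioo, sub_zero]
      _ ≤ volume (Ioo (0:ℝ) 1 ∩ Iic (c s)) :=
            measure_mono (fun β hβ => ⟨⟨hβ.1, lt_of_lt_of_le hβ.2 (hc1 s)⟩, hβ.2.le⟩)
    rw [le_antisymm hle hge]
    exact ENNReal.ofReal_toReal (hFne s)
  -- pushforward identity
  have hmap : Measure.map g ν = Measure.map X μ := by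
    have hprob : IsProbabilityMeasure (Measure.map g ν) :=
      Measure.isProbabilityMeasure_map hgmeas.aemeasurable
    refine Measure.ext_of_Iic _ _ (fun s => ?_)
    rw [Measure.map_apply hgmeas measurableSet_Iic, Measure.map_apply hXmeas measurableSet_Iic]
    exact hdist s
  -- transfer the integral
  have hcont : Continuous fun x : ℝ => max (x - t) 0 :=
    (continuous_id.sub continuous_const).max continuous_const
  have hint_eq : ∫ ω, max (X ω - t) 0 ∂μ = ∫ β in Ioo (0:ℝ) 1, max (VaR μ X β - t) 0 := by
    have e1 : ∫ ω, max (X ω - t) 0 ∂μ = ∫ x, max (x - t) 0 ∂(Measure.map X μ) :=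
      (integral_map hXmeas.aemeasurable hcont.aestronglyMeasurable).symm
    have e2 : ∫ x, max (x - t) 0 ∂(Measure.map g ν) = ∫ β, max (g β - t) 0 ∂ν :=
      integral_map hgmeas.aemeasurable hcont.aestronglyMeasurable
    rw [e1, ← hmap, e2, hν]
    exact setIntegral_congr_fun measurableSet_Ioo (fun β hβ => by rw [hgeq hβ])
  -- integrability of the quantile function
  have hXint' : Integrable (fun x : ℝ => x) (Measure.map X μ) :=
    (integrable_map_measure aestronglyMeasurable_id hXmeas.aemeasurable).mpr hXint
  have hgint : Integrable g ν := by
    have h1 : Integrable (fun x : ℝ => x) (Measure.map g ν) := by rw [hmap]; exact hXint'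
    exact (integrable_map_measure aestronglyMeasurable_id hgmeas.aemeasurable).mp h1
  have hQint : IntegrableOn (VaR μ X) (Ioo (0:ℝ) 1) volume := by
    have hae : g =ᵐ[ν] VaR μ X := by
      rw [hν]
      exact (ae_restrict_iff' measurableSet_Ioo).mpr (ae_of_all _ fun β hβ => hgeq hβ)
    exact hgint.congr hae
  have hvolfin : ∀ α : ℝ, volume (Ioo α (1:ℝ)) < ⊤ := by
    intro α
    rw [Real.volume_Ioo]
    exact ENNReal.ofReal_lt_top
  -- the ES identity
  have hES : ∀ α : ℝ, 0 ≤ α → α < 1 →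
      (1 - α) * (ES μ X α - t) = ∫ β in Ioo α 1, (VaR μ X β - t) := by
    intro α hα0 hα1
    have hsub : Ioo α 1 ⊆ Ioo (0:ℝ) 1 := Ioo_subset_Ioo_left hα0
    have hQα : IntegrableOn (VaR μ X) (Ioo α 1) volume := hQint.mono_set hsub
    have hconst : IntegrableOn (fun _ : ℝ => t) (Ioo α 1) volume :=
      integrableOn_const (hvolfin α).ne
    rw [integral_sub hQα hconst, setIntegral_const, Real.volume_real_Ioo_of_le hα1.le,
      smul_eq_mul]
    simp only [ES]
    have h1α : (1:ℝ) - α ≠ 0 := by linarith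
    field_simp
  set A := c t with hA
  have hA0 : 0 ≤ A := hc0 t
  have hA1 : A ≤ 1 := hc1 t
  have hhint : IntegrableOn (fun β => max (VaR μ X β - t) 0) (Ioo (0:ℝ) 1) volume :=
    (hQint.sub (integrableOn_const (hvolfin 0).ne)).pos_part
  constructor
  · -- membership: the max is attained at α = A
    rcases lt_or_eq_of_le hA1 with hAlt | hAeq
    · refine ⟨A, ⟨hA0, hA1⟩, ?_⟩
      rw [hint_eq, hES A hA0 hAlt]
      have hdisj : Disjoint (Ioc (0:ℝ) A) (Ioo A 1) := by
        apply Set.disjoint_left.mpr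
        rintro β ⟨_, h2⟩ ⟨h3, _⟩
        exact absurd h2 (not_le.mpr h3)
      have e0 : ∫ β in Ioc (0:ℝ) A, max (VaR μ X β - t) 0 = 0 := by
        rw [setIntegral_congr_fun (g := fun _ => (0:ℝ)) measurableSet_Ioc ?_, integral_zero]
        intro β hβ
        have hβmem : β ∈ Ioo (0:ℝ) 1 := ⟨hβ.1, lt_of_le_of_lt hβ.2 hAlt⟩
        have hle : VaR μ X β ≤ t := (hkey β hβmem t).mpr hβ.2
        simp only [max_eq_right (sub_nonpos.mpr hle)]
      have e1 : ∫ β in Ioo A 1, max (VaR μ X β - t) 0 = ∫ β in Ioo A 1, (VaR μ X β - t) := by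
        apply setIntegral_congr_fun measurableSet_Ioo
        intro β hβ
        have hβmem : β ∈ Ioo (0:ℝ) 1 := ⟨lt_of_le_of_lt hA0 hβ.1, hβ.2⟩
        have hgt : t < VaR μ X β := by
          by_contra hle
          push_neg at hle
          exact absurd ((hkey β hβmem t).mp hle) (not_le.mpr hβ.1)
        simp only [max_eq_left (sub_nonneg.mpr hgt.le)]
      calc ∫ β in Ioo (0:ℝ) 1, max (VaR μ X β - t) 0
          = ∫ β in Ioc 0 A ∪ Ioo A 1, max (VaR μ X β - t) 0 := by
            rw [Ioc_union_Ioo_eq_Ioo hA0 hAlt]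
        _ = (∫ β in Ioc (0:ℝ) A, max (VaR μ X β - t) 0)
            + ∫ β in Ioo A 1, max (VaR μ X β - t) 0 :=
            setIntegral_union hdisj measurableSet_Ioo
              (hhint.mono_set (fun β hβ => ⟨hβ.1, lt_of_le_of_lt hβ.2 hAlt⟩))
              (hhint.mono_set (Ioo_subset_Ioo_left hA0))
        _ = ∫ β in Ioo A 1, (VaR μ X β - t) := by rw [e0, e1, zero_add]
    · refine ⟨1, ⟨zero_le_one, le_refl 1⟩, ?_⟩
      rw [hint_eq]
      have hzero : ∀ β ∈ Ioo (0:ℝ) 1, max (VaR μ X β - t) 0 = 0 := by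
        intro β hβ
        have hle : VaR μ X β ≤ t := (hkey β hβ t).mpr (by rw [← hA, hAeq]; exact hβ.2.le)
        simp only [max_eq_right (sub_nonpos.mpr hle)]
      rw [setIntegral_congr_fun (g := fun _ => (0:ℝ)) measurableSet_Ioo hzero, integral_zero]
      simp
  · -- upper bound
    rintro y ⟨α, ⟨hα0, hα1⟩, rfl⟩
    rw [hint_eq]
    rcases lt_or_eq_of_le hα1 with hαlt | hαeq
    · rw [hES α hα0 hαlt]
      have hsub : Ioo α 1 ⊆ Ioo (0:ℝ) 1 := Ioo_subset_Ioo_left hα0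
      calc ∫ β in Ioo α 1, (VaR μ X β - t)
          ≤ ∫ β in Ioo α 1, max (VaR μ X β - t) 0 := by
            apply setIntegral_mono_on
              ((hQint.mono_set hsub).sub (integrableOn_const (hvolfin α).ne))
              (hhint.mono_set hsub) measurableSet_Ioo
            intro β _
            exact le_max_left _ _
        _ ≤ ∫ β in Ioo (0:ℝ) 1, max (VaR μ X β - t) 0 :=
            setIntegral_mono_set hhint (ae_of_all _ fun β => le_max_right _ _)
              (HasSubset.Subset.eventuallyLE hsub)
    · subst hαeq
      have h0 : (1 - (1:ℝ)) * (ES μ X 1 - t) = 0 := by ring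
      rw [h0]
      exact setIntegral_nonneg measurableSet_Ioo (fun β _ => le_max_right _ _)
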